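/- Let D ⊆ ℝ^d be open convex and y, ŷ càdlàg with y_0, ŷ_0 ∈ closure D. Let x, x̂ solve the respective penalized equations x_t = y_t + k_t, x̂_t = ŷ_t + k̂_t with k_t = -n∫_0^t (x_s - Π(x_s)) ds and k̂_t = -n∫_0^t (x̂_s - Π(x̂_s)) ds. Then for every t ≥ 0, |x_t - x̂_t|² ≤ |y_t - ŷ_t|² + 4 sup_{s ≤ t} |y_s - ŷ_s| (|k|_t + |k̂|_t), where |k|_t, |k̂|_t are total variations on [0,t]. -/

import Mathlib

open scoped RealInnerProductSpace
open MeasureTheory Set Filter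

variable {d : ℕ}

/-- A càdlàg function on `[0,∞)`: right-continuous with left limits. -/
def Cadlag (f : ℝ → EuclideanSpace ℝ (Fin d)) : Prop :=
  (∀ t : ℝ, 0 ≤ t → ContinuousWithinAt f (Set.Ici t) t) ∧
  (∀ t : ℝ, 0 < t → ∃ l, Filter.Tendsto f (nhdsWithin t (Set.Iio t)) (nhds l))

/-- `proj` is the metric projection (nearest-point map) onto `C`. -/
def IsProjOn (C : Set (EuclideanSpace ℝ (Fin d)))
    (proj : EuclideanSpace ℝ (Fin d) → EuclideanSpace ℝ (Fin d)) : Prop :=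
  ∀ z, proj z ∈ C ∧ ∀ w ∈ C, dist z (proj z) ≤ dist z w

/-- `x` solves the penalized equation `x t = y t - c ∫_0^t (x s - proj (x s)) ds`. -/
def PenalizedSol (proj : EuclideanSpace ℝ (Fin d) → EuclideanSpace ℝ (Fin d))
    (c : ℝ) (y x : ℝ → EuclideanSpace ℝ (Fin d)) : Prop :=
  (∀ t : ℝ, 0 ≤ t → IntervalIntegrable (fun s => x s - proj (x s)) volume 0 t) ∧
  (∀ t : ℝ, 0 ≤ t → x t = y t - c • ∫ s in (0:ℝ)..t, (x s - proj (x s)))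

/-- The oscillation of `f` on `[s, t)` is `< c`. -/
def OscLtOn (f : ℝ → EuclideanSpace ℝ (Fin d)) (s t c : ℝ) : Prop :=
  ∀ u ∈ Set.Ico s t, ∀ v ∈ Set.Ico s t, ‖f u - f v‖ < c

/-- `ω'_f(δ, q) < c`: there is a subdivision `0 = s 0 < ⋯ < s r = q` whose first `r - 1`
steps have length `≥ δ` and on whose half-open intervals `f` oscillates less than `c`. -/
def OmegaPrimeLt (f : ℝ → EuclideanSpace ℝ (Fin d)) (δ q c : ℝ) : Prop :=
  ∃ r : ℕ, 0 < r ∧ ∃ s : ℕ → ℝ, s 0 = 0 ∧ s r = q ∧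
    (∀ k < r, s k < s (k + 1)) ∧ (∀ k, k + 1 < r → δ ≤ s (k + 1) - s k) ∧
    ∀ k < r, OscLtOn f (s k) (s (k + 1)) c

open scoped Topology

set_option maxHeartbeats 1000000 in
/-- Monotonicity of the penalization operator `z ↦ z - proj z`. -/
lemma projMono {C : Set (EuclideanSpace ℝ (Fin d))} (hC : Convex ℝ C)
    {proj : EuclideanSpace ℝ (Fin d) → EuclideanSpace ℝ (Fin d)}
    (hproj : ∀ z, proj z ∈ C ∧ ∀ w ∈ C, dist z (proj z) ≤ dist z w)
    (u v : EuclideanSpace ℝ (Fin d)) :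
    0 ≤ ⟪(u - proj u) - (v - proj v), u - v⟫ := by
  have key : ∀ z w, w ∈ C → ⟪z - proj z, w - proj z⟫ ≤ 0 := by
    intro z w hw
    have hmem := (hproj z).1
    haveI : Nonempty C := ⟨⟨_, hmem⟩⟩
    have hbdd : BddBelow (Set.range fun w : C => ‖z - (w : EuclideanSpace ℝ (Fin d))‖) := by
      refine ⟨0, ?_⟩
      rintro r ⟨w', rfl⟩
      exact norm_nonneg _
    have hinf : ‖z - proj z‖ = ⨅ w : C, ‖z - w‖ := by
      apply le_antisymm
      · apply le_ciInf
        intro w'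
        simpa [dist_eq_norm] using (hproj z).2 w' w'.2
      · exact ciInf_le hbdd ⟨_, hmem⟩
    exact (norm_eq_iInf_iff_real_inner_le_zero hC hmem).1 hinf w hw
  have h1 : ⟪u - proj u, proj v - proj u⟫ ≤ 0 := key u _ (hproj v).1
  have h2 : ⟪v - proj v, proj u - proj v⟫ ≤ 0 := key v _ (hproj u).1
  set a := u - proj u with ha
  set b := v - proj v with hb
  set c := proj u - proj v with hc
  have hac : 0 ≤ ⟪a, c⟫ := by
    have hcc : ⟪a, c⟫ = -⟪a, proj v - proj u⟫ := by
      rw [hc, show proj u - proj v = -(proj v - proj u) from (neg_sub _ _).symm,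
        inner_neg_right]
    rw [hcc]
    linarith
  have hsplit : u - v = (a - b) + c := by rw [ha, hb, hc]; abel
  have e1 : ⟪a - b, (a - b) + c⟫ = ⟪a - b, a - b⟫ + ⟪a - b, c⟫ := inner_add_right _ _ _
  have e2 : ⟪a - b, c⟫ = ⟪a, c⟫ - ⟪b, c⟫ := inner_sub_left _ _ _
  have e3 : (0:ℝ) ≤ ⟪a - b, a - b⟫ := real_inner_self_nonneg
  rw [hsplit, e1, e2]
  linarith

/-- A càdlàg function is bounded on compact intervals. -/
lemma cadlagBounded {f : ℝ → EuclideanSpace ℝ (Fin d)} (hf : Cadlag f) (T : ℝ) :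
    ∃ C, ∀ s ∈ Icc (0:ℝ) T, ‖f s‖ ≤ C := by
  have hcomp : IsCompact (Icc (0:ℝ) T) := isCompact_Icc
  refine hcomp.induction_on (p := fun S => ∃ C, ∀ s ∈ S, ‖f s‖ ≤ C) ⟨0, by simp⟩
      (fun s t hsub ⟨C, hC⟩ => ⟨C, fun u hu => hC u (hsub hu)⟩)
      (fun s t ⟨C1, h1⟩ ⟨C2, h2⟩ => ⟨max C1 C2, fun u hu => hu.elim
        (fun h => (h1 u h).trans (le_max_left _ _))
        (fun h => (h2 u h).trans (le_max_right _ _))⟩) ?_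
  intro z hz
  have hright : ∀ᶠ u in 𝓝[Ici z] z, ‖f u‖ ≤ ‖f z‖ + 1 := by
    have h := Metric.tendsto_nhds.mp (hf.1 z hz.1) 1 one_pos
    filter_upwards [h] with u hu
    have : ‖f u‖ - ‖f z‖ ≤ ‖f u - f z‖ := norm_sub_norm_le _ _
    rw [dist_eq_norm] at hu; linarith
  rcases eq_or_lt_of_le hz.1 with h0 | h0
  · refine ⟨{u | ‖f u‖ ≤ ‖f z‖ + 1}, ?_, ⟨‖f z‖ + 1, fun u hu => hu⟩⟩
    have hsub : Icc (0:ℝ) T ⊆ Ici z := fun u hu => h0 ▸ hu.1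
    exact nhdsWithin_mono z hsub hright
  · obtain ⟨l, hl⟩ := hf.2 z h0
    have hleft : ∀ᶠ u in 𝓝[Iio z] z, ‖f u‖ ≤ ‖l‖ + 1 := by
      have h := Metric.tendsto_nhds.mp hl 1 one_pos
      filter_upwards [h] with u hu
      have : ‖f u‖ - ‖l‖ ≤ ‖f u - l‖ := norm_sub_norm_le _ _
      rw [dist_eq_norm] at hu; linarith
    set C := max (‖l‖ + 1) (‖f z‖ + 1) with hC
    refine ⟨{u | ‖f u‖ ≤ C}, ?_, ⟨C, fun u hu => hu⟩⟩
    have hle : 𝓝[Icc (0:ℝ) T] z ≤ 𝓝[Iio z] z ⊔ 𝓝[Ici z] z := by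
      rw [← nhdsWithin_union, Iio_union_Ici]
      exact nhdsWithin_mono z (subset_univ _)
    refine hle ?_
    rw [mem_sup]
    constructor
    · filter_upwards [hleft] with u hu; exact hu.trans (le_max_left _ _)
    · filter_upwards [hright] with u hu; exact hu.trans (le_max_right _ _)

/-- Integrability of `s ↦ ⟪∫_{(0,s]} g, g s⟫` on `(0,t]`. -/
lemma auxIntegrable {g : ℝ → EuclideanSpace ℝ (Fin d)} {t : ℝ} (ht : 0 ≤ t)
    (hg : IntegrableOn g (Ioc 0 t) volume) :
    Integrable (fun s => ⟪∫ u in Ioc (0:ℝ) s, g u, g s⟫)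
      (volume.restrict (Ioc (0:ℝ) t)) := by
  set A : ℝ → EuclideanSpace ℝ (Fin d) := (fun s => ∫ u in Ioc (0:ℝ) s, g u) with hA
  set K : ℝ := (∫ s in Ioc (0:ℝ) t, ‖g s‖) with hK
  have hA_cont : ContinuousOn A (Icc (0:ℝ) t) :=
    intervalIntegral.continuousOn_primitive
      ((integrableOn_Icc_iff_integrableOn_Ioc).2 hg)
  have hA_bdd : ∀ s ∈ Ioc (0:ℝ) t, ‖A s‖ ≤ K := by
    intro s hs
    calc ‖A s‖ ≤ ∫ u in Ioc (0:ℝ) s, ‖g u‖ := norm_integral_le_integral_norm _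
      _ ≤ K := setIntegral_mono_set hg.norm
          (Eventually.of_forall fun u => norm_nonneg _)
          (HasSubset.Subset.eventuallyLE (Ioc_subset_Ioc_right hs.2))
  have hAm : AEStronglyMeasurable A (volume.restrict (Ioc (0:ℝ) t)) :=
    (hA_cont.aestronglyMeasurable measurableSet_Icc).mono_measure
      (Measure.restrict_mono Ioc_subset_Icc_self le_rfl)
  refine Integrable.mono' (hg.norm.const_mul K) (hAm.inner hg.aestronglyMeasurable) ?_
  refine (ae_restrict_iff' measurableSet_Ioc).2 (ae_of_all _ fun s hs => ?_)
  calc ‖⟪A s, g s⟫‖ = |⟪A s, g s⟫| := Real.norm_eq_abs _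
    _ ≤ ‖A s‖ * ‖g s‖ := abs_real_inner_le_norm _ _
    _ ≤ K * ‖g s‖ := mul_le_mul_of_nonneg_right (hA_bdd s hs) (norm_nonneg _)

/-- The key "integration by parts" identity for primitives of integrable functions. -/
lemma keyIdentity {g : ℝ → EuclideanSpace ℝ (Fin d)} {t : ℝ} (ht : 0 ≤ t)
    (hg : IntegrableOn g (Ioc 0 t) volume) :
    ‖∫ s in Ioc (0:ℝ) t, g s‖ ^ 2
      = 2 * ∫ s in Ioc (0:ℝ) t, ⟪∫ u in Ioc (0:ℝ) s, g u, g s⟫ := by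
  set μ : Measure ℝ := volume.restrict (Ioc (0:ℝ) t) with hμ
  have hgi : Integrable g μ := hg
  set A : ℝ → EuclideanSpace ℝ (Fin d) := (fun s => ∫ u in Ioc (0:ℝ) s, g u) with hA
  set I : EuclideanSpace ℝ (Fin d) := (∫ s in Ioc (0:ℝ) t, g s) with hI
  set G : ℝ → ℝ → ℝ := fun u v => if v < u then ⟪g u, g v⟫ else 0 with hG
  -- integrability on the product
  have hF_int : Integrable (fun p : ℝ × ℝ => ‖g p.1‖ * ‖g p.2‖) (μ.prod μ) :=
    hgi.norm.mul_prod hgi.norm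
  have hFm : AEStronglyMeasurable (fun p : ℝ × ℝ => ⟪g p.1, g p.2⟫) (μ.prod μ) :=
    (hgi.aestronglyMeasurable.comp_fst).inner (hgi.aestronglyMeasurable.comp_snd)
  have hGeq : Function.uncurry G =
      ({p : ℝ × ℝ | p.2 < p.1}).indicator (fun p => ⟪g p.1, g p.2⟫) := by
    funext p
    by_cases h : p.2 < p.1 <;> simp [G, Function.uncurry, Set.indicator_apply, h]
  have hG_int : Integrable (Function.uncurry G) (μ.prod μ) := by
    rw [hGeq]
    refine Integrable.mono' hF_int
      (hFm.indicator (measurableSet_lt measurable_snd measurable_fst)) ?_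
    refine ae_of_all _ fun p => ?_
    rw [Set.indicator_apply]
    by_cases h : p ∈ {p : ℝ × ℝ | p.2 < p.1}
    · simp only [h, if_true]
      calc ‖⟪g p.1, g p.2⟫‖ = |⟪g p.1, g p.2⟫| := Real.norm_eq_abs _
        _ ≤ ‖g p.1‖ * ‖g p.2‖ := abs_real_inner_le_norm _ _
    · simp only [h, if_false]
      simp [mul_nonneg (norm_nonneg _) (norm_nonneg _)]
  have hswap : ∫ u, (∫ v, G u v ∂μ) ∂μ = ∫ v, (∫ u, G u v ∂μ) ∂μ :=
    integral_integral_swap hG_int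
  -- compute the left-hand side
  have hL : ∀ u ∈ Ioc (0:ℝ) t, (∫ v, G u v ∂μ) = ⟪g u, A u⟫ := by
    intro u hu
    have h1 : (fun v => G u v) = (Iio u).indicator (fun v => ⟪g u, g v⟫) := by
      funext v
      by_cases h : v < u <;> simp [G, Set.indicator_apply, h]
    rw [h1, integral_indicator measurableSet_Iio, hμ,
      Measure.restrict_restrict measurableSet_Iio]
    have h2 : Iio u ∩ Ioc (0:ℝ) t = Ioo 0 u := by
      ext v
      simp only [mem_inter_iff, mem_Iio, mem_Ioc, mem_Ioo]
      constructor
      · rintro ⟨hvu, hv0, _⟩; exact ⟨hv0, hvu⟩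
      · rintro ⟨hv0, hvu⟩; exact ⟨hvu, hv0, (hvu.trans_le hu.2).le⟩
    rw [h2, setIntegral_congr_set Ioo_ae_eq_Ioc]
    exact integral_inner (hg.mono_set (Ioc_subset_Ioc_right hu.2)) (g u)
  -- compute the right-hand side
  have hR : ∀ v ∈ Ioc (0:ℝ) t, (∫ u, G u v ∂μ) = ⟪I - A v, g v⟫ := by
    intro v hv
    have h1 : (fun u => G u v) = (Ioi v).indicator (fun u => ⟪g u, g v⟫) := by
      funext u
      by_cases h : v < u <;> simp [G, Set.indicator_apply, mem_Ioi, h]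
    rw [h1, integral_indicator measurableSet_Ioi, hμ,
      Measure.restrict_restrict measurableSet_Ioi]
    have h2 : Ioi v ∩ Ioc (0:ℝ) t = Ioc v t := by
      ext u
      simp only [mem_inter_iff, mem_Ioi, mem_Ioc]
      constructor
      · rintro ⟨hvu, _, hut⟩; exact ⟨hvu, hut⟩
      · rintro ⟨hvu, hut⟩; exact ⟨hvu, hv.1.trans hvu, hut⟩
    rw [h2]
    have h4 : ∫ u in Ioc v t, ⟪g u, g v⟫ = ⟪∫ u in Ioc v t, g u, g v⟫ := by
      calc ∫ u in Ioc v t, ⟪g u, g v⟫ = ∫ u in Ioc v t, ⟪g v, g u⟫ := by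
            simp_rw [real_inner_comm]
        _ = ⟪g v, ∫ u in Ioc v t, g u⟫ :=
            integral_inner (hg.mono_set (Ioc_subset_Ioc_left hv.1.le)) (g v)
        _ = ⟪∫ u in Ioc v t, g u, g v⟫ := real_inner_comm _ _
    have h5 : ∫ u in Ioc v t, g u = I - A v := by
      have hsplit : A v + ∫ u in Ioc v t, g u = I := by
        rw [hI, ← Ioc_union_Ioc_eq_Ioc hv.1.le hv.2]
        exact (setIntegral_union (Set.Ioc_disjoint_Ioc_of_le le_rfl) measurableSet_Ioc
          (hg.mono_set (Ioc_subset_Ioc_right hv.2))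
          (hg.mono_set (Ioc_subset_Ioc_left hv.1.le))).symm
      exact eq_sub_of_add_eq' hsplit
    rw [h4, h5]
  have hLHS : ∫ u, (∫ v, G u v ∂μ) ∂μ = ∫ u in Ioc (0:ℝ) t, ⟪A u, g u⟫ := by
    rw [hμ]
    refine (setIntegral_congr_fun measurableSet_Ioc fun u hu => ?_)
    rw [hL u hu, real_inner_comm]
  have hRHS : ∫ v, (∫ u, G u v ∂μ) ∂μ
      = ‖I‖ ^ 2 - ∫ v in Ioc (0:ℝ) t, ⟪A v, g v⟫ := by
    rw [hμ]
    rw [setIntegral_congr_fun measurableSet_Ioc hR]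
    have : ∀ v, ⟪I - A v, g v⟫ = ⟪I, g v⟫ - ⟪A v, g v⟫ := fun v =>
      inner_sub_left _ _ _
    simp_rw [this]
    rw [integral_sub (hgi.const_inner I) (auxIntegrable ht hg)]
    rw [integral_inner hgi I, real_inner_self_eq_norm_sq]
  rw [hLHS, hRHS] at hswap
  linarith

/-- Lemma 2.2(i) of [laus]: comparison of two penalized solutions. -/
theorem stmt17 (d : ℕ) (D : Set (EuclideanSpace ℝ (Fin d)))
    (hD : IsOpen D) (hconv : Convex ℝ D) (hne : D.Nonempty)
    (proj : EuclideanSpace ℝ (Fin d) → EuclideanSpace ℝ (Fin d))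
    (hproj : IsProjOn (closure D) proj)
    (n : ℕ) (y yh x xh : ℝ → EuclideanSpace ℝ (Fin d))
    (hy : Cadlag y) (hyh : Cadlag yh)
    (hy0 : y 0 ∈ closure D) (hyh0 : yh 0 ∈ closure D)
    (hx : PenalizedSol proj (n : ℝ) y x)
    (hxh : PenalizedSol proj (n : ℝ) yh xh) :
    ∀ t : ℝ, 0 ≤ t →
      ‖x t - xh t‖ ^ 2 ≤ ‖y t - yh t‖ ^ 2 +
        4 * (⨆ s : Set.Icc (0:ℝ) t, ‖y s - yh s‖) *
          ((n : ℝ) * (∫ s in (0:ℝ)..t, ‖x s - proj (x s)‖) +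
           (n : ℝ) * ∫ s in (0:ℝ)..t, ‖xh s - proj (xh s)‖) := by
  intro t ht
  set P : ℝ → EuclideanSpace ℝ (Fin d) := fun s => x s - proj (x s) with hP
  set Ph : ℝ → EuclideanSpace ℝ (Fin d) := fun s => xh s - proj (xh s) with hPh
  set g : ℝ → EuclideanSpace ℝ (Fin d) := fun s => (n : ℝ) • (Ph s - P s) with hg
  have hPint : IntervalIntegrable P volume 0 t := hx.1 t ht
  have hPhint : IntervalIntegrable Ph volume 0 t := hxh.1 t ht
  have hgII : IntervalIntegrable g volume 0 t := ((hPhint.sub hPint).smul (n : ℝ))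
  have hgint : IntegrableOn g (Ioc 0 t) volume := by
    simpa using hgII.1
  set w : ℝ → EuclideanSpace ℝ (Fin d) := fun s => y s - yh s with hw
  set A : ℝ → EuclideanSpace ℝ (Fin d) := (fun s => ∫ u in Ioc (0:ℝ) s, g u) with hA
  -- relation between x - xh, w and A
  have hrel : ∀ s : ℝ, 0 ≤ s → x s - xh s = w s + A s := by
    intro s hs
    have hAs : A s = ∫ u in (0:ℝ)..s, g u := (intervalIntegral.integral_of_le hs).symm
    have hgsplit : ∫ u in (0:ℝ)..s, g u
        = (n : ℝ) • (∫ u in (0:ℝ)..s, Ph u) - (n : ℝ) • ∫ u in (0:ℝ)..s, P u := by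
      rw [hg]
      rw [intervalIntegral.integral_smul, intervalIntegral.integral_sub (hxh.1 s hs) (hx.1 s hs),
        smul_sub]
    rw [hx.2 s hs, hxh.2 s hs, hw, hAs, hgsplit]
    simp only [hP, hPh]
    abel
  -- the supremum bound
  set M : ℝ := ⨆ s : Set.Icc (0:ℝ) t, ‖y s - yh s‖ with hM
  obtain ⟨Cy, hCy⟩ := cadlagBounded hy t
  obtain ⟨Cyh, hCyh⟩ := cadlagBounded hyh t
  have hbdd : BddAbove (Set.range fun s : Set.Icc (0:ℝ) t => ‖y s - yh s‖) := by
    refine ⟨Cy + Cyh, ?_⟩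
    rintro r ⟨s, rfl⟩
    calc ‖y s - yh s‖ ≤ ‖y s‖ + ‖yh s‖ := norm_sub_le _ _
      _ ≤ Cy + Cyh := add_le_add (hCy s s.2) (hCyh s s.2)
  have hMle : ∀ s ∈ Icc (0:ℝ) t, ‖w s‖ ≤ M := fun s hs =>
    le_ciSup hbdd (⟨s, hs⟩ : Set.Icc (0:ℝ) t)
  have hM0 : 0 ≤ M := le_trans (norm_nonneg _) (hMle t ⟨ht, le_rfl⟩)
  -- bound on the primitive
  set K : ℝ := (∫ s in Ioc (0:ℝ) t, ‖g s‖) with hK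
  have hK0 : 0 ≤ K := setIntegral_nonneg measurableSet_Ioc fun s _ => norm_nonneg _
  have hAbd : ∀ s ∈ Ioc (0:ℝ) t ∪ {t}, ‖A s‖ ≤ K := by
    intro s hs
    have hst : s ≤ t := by rcases hs with hs | hs; exacts [hs.2, le_of_eq (mem_singleton_iff.1 hs)]
    calc ‖A s‖ ≤ ∫ u in Ioc (0:ℝ) s, ‖g u‖ := norm_integral_le_integral_norm _
      _ ≤ K := setIntegral_mono_set hgint.norm
          (Eventually.of_forall fun u => norm_nonneg _)
          (HasSubset.Subset.eventuallyLE (Ioc_subset_Ioc_right hst))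
  -- monotonicity gives the sign condition
  have hmono : ∀ s : ℝ, ⟪x s - xh s, g s⟫ ≤ 0 := by
    intro s
    have h0 := projMono (hconv.closure) hproj (x s) (xh s)
    have : ⟪x s - xh s, g s⟫ = -((n : ℝ) * ⟪P s - Ph s, x s - xh s⟫) := by
      rw [hg, real_inner_smul_right]
      rw [show (Ph s - P s) = -(P s - Ph s) by abel, inner_neg_right]
      rw [real_inner_comm]
      ring
    rw [this]
    have hn : (0:ℝ) ≤ (n : ℝ) := Nat.cast_nonneg n
    have := mul_nonneg hn h0
    simpa [hP, hPh] using neg_nonpos_of_nonneg this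
  -- the key identity and estimate
  have hkey : ‖A t‖ ^ 2 = 2 * ∫ s in Ioc (0:ℝ) t, ⟪A s, g s⟫ := keyIdentity ht hgint
  have hbound : ∫ s in Ioc (0:ℝ) t, ⟪A s, g s⟫ ≤ M * K := by
    have hint1 : Integrable (fun s => ⟪A s, g s⟫) (volume.restrict (Ioc (0:ℝ) t)) :=
      auxIntegrable ht hgint
    have hle : ∀ s ∈ Ioc (0:ℝ) t, ⟪A s, g s⟫ ≤ M * ‖g s‖ := by
      intro s hs
      have hxs : A s = (x s - xh s) - w s := by rw [hrel s hs.1.le]; abel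
      have : ⟪A s, g s⟫ = ⟪x s - xh s, g s⟫ - ⟪w s, g s⟫ := by
        rw [hxs, inner_sub_left]
      rw [this]
      have h1 := hmono s
      have h2 : -⟪w s, g s⟫ ≤ ‖w s‖ * ‖g s‖ := by
        have := abs_real_inner_le_norm (w s) (g s)
        have := neg_abs_le ⟪w s, g s⟫
        linarith
      have h3 : ‖w s‖ * ‖g s‖ ≤ M * ‖g s‖ :=
        mul_le_mul_of_nonneg_right (hMle s ⟨hs.1.le, hs.2⟩) (norm_nonneg _)
      linarith
    calc ∫ s in Ioc (0:ℝ) t, ⟪A s, g s⟫ ≤ ∫ s in Ioc (0:ℝ) t, M * ‖g s‖ :=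
          setIntegral_mono_on hint1 (hgint.norm.const_mul M) measurableSet_Ioc hle
      _ = M * K := by rw [hK, integral_const_mul]
  -- K is bounded by the penalization integrals
  set Φ : ℝ := (n : ℝ) * (∫ s in (0:ℝ)..t, ‖P s‖) + (n : ℝ) * ∫ s in (0:ℝ)..t, ‖Ph s‖ with hΦ
  have hKΦ : K ≤ Φ := by
    have hKi : K = ∫ s in (0:ℝ)..t, ‖g s‖ := (intervalIntegral.integral_of_le ht).symm
    have hmono2 : ∫ s in (0:ℝ)..t, ‖g s‖
        ≤ ∫ s in (0:ℝ)..t, ((n : ℝ) * ‖P s‖ + (n : ℝ) * ‖Ph s‖) := by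
      refine intervalIntegral.integral_mono_on ht hgII.norm
        ((hPint.norm.const_mul _).add (hPhint.norm.const_mul _)) fun s _ => ?_
      have : ‖g s‖ = (n : ℝ) * ‖Ph s - P s‖ := by
        rw [hg]; simp [norm_smul]
      rw [this]
      have h1 : ‖Ph s - P s‖ ≤ ‖Ph s‖ + ‖P s‖ := norm_sub_le _ _
      have hn : (0:ℝ) ≤ (n : ℝ) := Nat.cast_nonneg n
      nlinarith
    rw [hKi, hΦ]
    rw [intervalIntegral.integral_add (hPint.norm.const_mul _) (hPhint.norm.const_mul _),
      intervalIntegral.integral_const_mul, intervalIntegral.integral_const_mul] at hmono2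
    exact hmono2
  -- final assembly
  have hxt : x t - xh t = w t + A t := hrel t ht
  have hAt : ‖A t‖ ≤ K := hAbd t (Or.inr rfl)
  have hwt : ‖w t‖ ≤ M := hMle t ⟨ht, le_rfl⟩
  have hexp : ‖x t - xh t‖ ^ 2 = ‖w t‖ ^ 2 + 2 * ⟪w t, A t⟫ + ‖A t‖ ^ 2 := by
    rw [hxt]; exact norm_add_sq_real _ _
  have hinner : ⟪w t, A t⟫ ≤ M * K := by
    calc ⟪w t, A t⟫ ≤ ‖w t‖ * ‖A t‖ := real_inner_le_norm _ _
      _ ≤ M * K := mul_le_mul hwt hAt (norm_nonneg _) hM0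
  have hAt2 : ‖A t‖ ^ 2 ≤ 2 * (M * K) := by rw [hkey]; linarith
  have hMK : M * K ≤ M * Φ := mul_le_mul_of_nonneg_left hKΦ hM0
  calc ‖x t - xh t‖ ^ 2 = ‖w t‖ ^ 2 + 2 * ⟪w t, A t⟫ + ‖A t‖ ^ 2 := hexp
    _ ≤ ‖w t‖ ^ 2 + 2 * (M * K) + 2 * (M * K) := by linarith
    _ ≤ ‖w t‖ ^ 2 + 4 * M * Φ := by linarith
    _ = ‖y t - yh t‖ ^ 2 + 4 * M * Φ := rfl
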